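/- Let n ≥ 1, d ≥ 1, ρ ∈ [0,1), γ ≥ 0, and let W ∈ ℝ^{n×n} satisfy W𝟙 = 𝟙, 𝟙ᵀW = 𝟙ᵀ, and ‖W − (1/n)𝟙𝟙ᵀ‖₂ ≤ ρ. Let x, h ∈ ℝ^{n×d} and set x' = W(x − γh). Then, with Π = I_n − (1/n)𝟙𝟙ᵀ, ‖Πx'‖_F² ≤ (2ρ²/(1+ρ²))·‖Πx‖_F² + (2γ²ρ²/(1−ρ²))·‖Πh‖_F². -/

import Mathlib

set_option autoImplicit false
set_option maxHeartbeats 1000000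

open Matrix MeasureTheory

noncomputable section

/-- The all-ones vector in `ℝ^n`. -/
def onesVec (n : ℕ) : Fin n → ℝ := fun _ => 1

/-- The all-ones `n × n` matrix `𝟙𝟙ᵀ`. -/
def onesMat (n : ℕ) : Matrix (Fin n) (Fin n) ℝ := Matrix.of fun _ _ => (1 : ℝ)

/-- The averaging matrix `(1/n)𝟙𝟙ᵀ`. -/
def avgMat (n : ℕ) : Matrix (Fin n) (Fin n) ℝ := (n : ℝ)⁻¹ • onesMat n

/-- Spectral norm (largest singular value) of a real matrix. -/
def specNorm {m n : ℕ} (M : Matrix (Fin m) (Fin n) ℝ) : ℝ :=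
  ‖(Matrix.toEuclideanLin (𝕜 := ℝ) M).toContinuousLinearMap‖

/-- Frobenius norm of a real matrix. -/
def frobNorm {m n : ℕ} (M : Matrix (Fin m) (Fin n) ℝ) : ℝ :=
  Real.sqrt (∑ i, ∑ j, (M i j) ^ 2)

/-- The weight-matrix class `W_{n,β}`. -/
def memW (n : ℕ) (β : ℝ) (W : Matrix (Fin n) (Fin n) ℝ) : Prop :=
  W *ᵥ onesVec n = onesVec n ∧ onesVec n ᵥ* W = onesVec n ∧
    specNorm (W - avgMat n) ≤ β

/-- The sun-shaped graph `S_{n,C}`. -/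
def sunGraph (n : ℕ) (C : Finset (Fin n)) : SimpleGraph (Fin n) where
  Adj i j := i ≠ j ∧ (i ∈ C ∨ j ∈ C)
  symm := by
    refine ⟨?_⟩
    intro i j h
    exact ⟨fun hej => h.1 hej.symm, h.2.symm⟩
  loopless := by refine ⟨?_⟩; intro i h; exact h.1 rfl

instance (n : ℕ) (C : Finset (Fin n)) : DecidableRel (sunGraph n C).Adj :=
  fun i j => inferInstanceAs (Decidable (i ≠ j ∧ (i ∈ C ∨ j ∈ C)))

/-- One-step neighborhood `N_G(I)` (including `I` itself). -/
def nbhd {n : ℕ} (G : SimpleGraph (Fin n)) (I : Set (Fin n)) : Set (Fin n) :=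
  I ∪ {j | ∃ i ∈ I, G.Adj i j}

/-- Iterated neighborhood `N_{G^t}(N_{G^{t+1}}(⋯ N_{G^{t+R-1}}(I) ⋯))`. -/
def iterNbhd {n : ℕ} (G : ℕ → SimpleGraph (Fin n)) (t : ℕ) :
    ℕ → Set (Fin n) → Set (Fin n)
  | 0, I => I
  | R + 1, I => nbhd (G t) (iterNbhd G (t + 1) R I)

/-- Directed effective distance: smallest `R ≥ 1` such that a message sent from `i`
at some round `t` reaches `j` after `R` rounds. -/
def effDistOne {n : ℕ} (G : ℕ → SimpleGraph (Fin n)) (i j : Fin n) : ℕ :=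
  sInf {R | 1 ≤ R ∧ ∃ t, j ∈ iterNbhd G t R {i}}

/-- Effective distance between two nodes. -/
def effDistPair {n : ℕ} (G : ℕ → SimpleGraph (Fin n)) (i j : Fin n) : ℕ :=
  max (effDistOne G i j) (effDistOne G j i)

/-- Effective distance between two disjoint sets of nodes. -/
def effDistSets {n : ℕ} (G : ℕ → SimpleGraph (Fin n)) (I1 I2 : Set (Fin n)) : ℕ :=
  sInf {m | ∃ i ∈ I1, ∃ j ∈ I2, m = effDistPair G i j}



lemma frobNorm_eq' {m n : ℕ} (M : Matrix (Fin m) (Fin n) ℝ) :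
    frobNorm M = ‖((WithLp.equiv 2 (Fin m × Fin n → ℝ)).symm (fun p => M p.1 p.2) :
      EuclideanSpace ℝ (Fin m × Fin n))‖ := by
  rw [EuclideanSpace.norm_eq]
  simp [frobNorm, Fintype.sum_prod_type, Real.norm_eq_abs, sq_abs]

lemma frobNorm_nonneg' {m n : ℕ} (M : Matrix (Fin m) (Fin n) ℝ) : 0 ≤ frobNorm M :=
  Real.sqrt_nonneg _

lemma frobNorm_sub_le' {m n : ℕ} (A B : Matrix (Fin m) (Fin n) ℝ) :
    frobNorm (A - B) ≤ frobNorm A + frobNorm B := by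
  rw [frobNorm_eq', frobNorm_eq', frobNorm_eq']
  have : ((WithLp.equiv 2 (Fin m × Fin n → ℝ)).symm (fun p => (A - B) p.1 p.2) :
      EuclideanSpace ℝ (Fin m × Fin n)) =
      (WithLp.equiv 2 (Fin m × Fin n → ℝ)).symm (fun p => A p.1 p.2) -
      (WithLp.equiv 2 (Fin m × Fin n → ℝ)).symm (fun p => B p.1 p.2) := by
    rfl
  rw [this]; exact norm_sub_le _ _

lemma frobNorm_smul' {m n : ℕ} (c : ℝ) (M : Matrix (Fin m) (Fin n) ℝ) :
    frobNorm (c • M) = |c| * frobNorm M := by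
  simp only [frobNorm, Matrix.smul_apply, smul_eq_mul, mul_pow, ← Finset.mul_sum]
  rw [Real.sqrt_mul (sq_nonneg c), Real.sqrt_sq_eq_abs]

lemma mulVec_sq_sum_le' {m n : ℕ} (N : Matrix (Fin m) (Fin n) ℝ) (v : Fin n → ℝ) :
    ∑ i, (N *ᵥ v) i ^ 2 ≤ specNorm N ^ 2 * ∑ j, v j ^ 2 := by
  have hv := (Matrix.toEuclideanLin (𝕜 := ℝ) N).toContinuousLinearMap.le_opNorm
    ((WithLp.equiv 2 (Fin n → ℝ)).symm v)
  have e : Matrix.toEuclideanLin N ((WithLp.equiv 2 (Fin n → ℝ)).symm v)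
      = (WithLp.equiv 2 (Fin m → ℝ)).symm (N *ᵥ v) := Matrix.toEuclideanLin_apply_piLp_toLp N v
  rw [LinearMap.coe_toContinuousLinearMap', e] at hv
  have h1 : ‖((WithLp.equiv 2 (Fin m → ℝ)).symm (N *ᵥ v) : EuclideanSpace ℝ (Fin m))‖
      = Real.sqrt (∑ i, (N *ᵥ v) i ^ 2) := by
    rw [EuclideanSpace.norm_eq]; simp [Real.norm_eq_abs, sq_abs]
  have h2 : ‖((WithLp.equiv 2 (Fin n → ℝ)).symm v : EuclideanSpace ℝ (Fin n))‖
      = Real.sqrt (∑ j, v j ^ 2) := by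
    rw [EuclideanSpace.norm_eq]; simp [Real.norm_eq_abs, sq_abs]
  rw [h1, h2] at hv
  have := mul_self_le_mul_self (Real.sqrt_nonneg _) hv
  rw [Real.mul_self_sqrt (by positivity)] at this
  calc ∑ i, (N *ᵥ v) i ^ 2 ≤ (specNorm N * Real.sqrt (∑ j, v j ^ 2)) *
      (specNorm N * Real.sqrt (∑ j, v j ^ 2)) := this
    _ = specNorm N ^ 2 * ∑ j, v j ^ 2 := by
        rw [mul_mul_mul_comm, Real.mul_self_sqrt (by positivity)]; ring

lemma frobNorm_mul_le' {m n d : ℕ} (N : Matrix (Fin m) (Fin n) ℝ)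
    (M : Matrix (Fin n) (Fin d) ℝ) :
    frobNorm (N * M) ≤ specNorm N * frobNorm M := by
  have hsq : frobNorm (N * M) ^ 2 ≤ (specNorm N * frobNorm M) ^ 2 := by
    have e1 : frobNorm (N * M) ^ 2 = ∑ i, ∑ j, ((N * M) i j) ^ 2 := by
      rw [frobNorm, Real.sq_sqrt (by positivity)]
    have e2 : frobNorm M ^ 2 = ∑ i, ∑ j, (M i j) ^ 2 := by
      rw [frobNorm, Real.sq_sqrt (by positivity)]
    rw [e1, mul_pow, e2, Finset.sum_comm]
    rw [show ∑ i, ∑ j, (M i j)^2 = ∑ j, ∑ i, (M i j)^2 from Finset.sum_comm .. ,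
      Finset.mul_sum]
    apply Finset.sum_le_sum
    intro j _
    have := mulVec_sq_sum_le' N (fun k => M k j)
    simpa [Matrix.mul_apply, Matrix.mulVec, dotProduct] using this
  have h0 : 0 ≤ specNorm N * frobNorm M :=
    mul_nonneg (norm_nonneg _) (frobNorm_nonneg' M)
  nlinarith [frobNorm_nonneg' (N * M)]

/-- one-step consensus recursion, deterministic: for
`W ∈ W_{n,ρ}` and `x' = W(x - γh)`, with `Π = I - (1/n)𝟙𝟙ᵀ`,
`‖Πx'‖_F² ≤ (2ρ²/(1+ρ²))‖Πx‖_F² + (2γ²ρ²/(1-ρ²))‖Πh‖_F²`. -/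
theorem consensus_one_step (n d : ℕ) (hn : 1 ≤ n) (hd : 1 ≤ d)
    (ρ : ℝ) (hρ0 : 0 ≤ ρ) (hρ1 : ρ < 1) (γ : ℝ) (hγ : 0 ≤ γ)
    (W : Matrix (Fin n) (Fin n) ℝ)
    (hW1 : W *ᵥ onesVec n = onesVec n) (hW2 : onesVec n ᵥ* W = onesVec n)
    (hWρ : specNorm (W - avgMat n) ≤ ρ)
    (x h x' : Matrix (Fin n) (Fin d) ℝ) (hx' : x' = W * (x - γ • h)) :
    frobNorm ((1 - avgMat n) * x') ^ 2
      ≤ (2 * ρ ^ 2 / (1 + ρ ^ 2)) * frobNorm ((1 - avgMat n) * x) ^ 2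
        + (2 * γ ^ 2 * ρ ^ 2 / (1 - ρ ^ 2)) * frobNorm ((1 - avgMat n) * h) ^ 2 := by
  have hn0 : (n : ℝ) ≠ 0 := Nat.cast_ne_zero.mpr (by omega)
  have hWA : W * avgMat n = avgMat n := by
    ext i j
    have := congr_fun hW1 i
    simp only [Matrix.mulVec, dotProduct, onesVec, mul_one] at this
    simp [avgMat, onesMat, Matrix.mul_apply, ← Finset.sum_mul, this]
  have hAW : avgMat n * W = avgMat n := by
    ext i j
    have := congr_fun hW2 j
    simp only [Matrix.vecMul, dotProduct, onesVec, one_mul] at this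
    simp [avgMat, onesMat, Matrix.mul_apply, ← Finset.mul_sum, this]
  have hAA : avgMat n * avgMat n = avgMat n := by
    ext i j
    simp [avgMat, onesMat, Matrix.mul_apply, Finset.sum_const, hn0]
  have key : (1 - avgMat n) * x'
      = (W - avgMat n) * ((1 - avgMat n) * x)
        - γ • ((W - avgMat n) * ((1 - avgMat n) * h)) := by
    rw [hx']
    have e1 : (1 - avgMat n) * (W * (x - γ • h)) = (W - avgMat n) * (x - γ • h) := by
      rw [← Matrix.mul_assoc, Matrix.sub_mul, Matrix.one_mul, hAW]
    have e2 : (W - avgMat n) * (1 - avgMat n) = W - avgMat n := by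
      rw [Matrix.mul_sub, Matrix.mul_one, Matrix.sub_mul, hWA, hAA]; abel
    rw [e1, ← Matrix.mul_assoc, ← Matrix.mul_assoc, e2, ← Matrix.mul_smul, ← Matrix.mul_sub]
  set a := frobNorm ((1 - avgMat n) * x) with ha
  set b := frobNorm ((1 - avgMat n) * h) with hb
  have ha0 : 0 ≤ a := frobNorm_nonneg' _
  have hb0 : 0 ≤ b := frobNorm_nonneg' _
  have hspec0 : 0 ≤ specNorm (W - avgMat n) := norm_nonneg _
  have hF : frobNorm ((1 - avgMat n) * x') ≤ ρ * a + γ * (ρ * b) := by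
    rw [key]
    calc frobNorm ((W - avgMat n) * ((1 - avgMat n) * x)
          - γ • ((W - avgMat n) * ((1 - avgMat n) * h)))
        ≤ frobNorm ((W - avgMat n) * ((1 - avgMat n) * x))
          + frobNorm (γ • ((W - avgMat n) * ((1 - avgMat n) * h))) := frobNorm_sub_le' _ _
      _ ≤ ρ * a + γ * (ρ * b) := by
          have h1 : frobNorm ((W - avgMat n) * ((1 - avgMat n) * x)) ≤ ρ * a :=
            (frobNorm_mul_le' _ _).trans (by
              apply mul_le_mul_of_nonneg_right hWρ ha0)
          have h2 : frobNorm ((W - avgMat n) * ((1 - avgMat n) * h)) ≤ ρ * b :=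
            (frobNorm_mul_le' _ _).trans (by
              apply mul_le_mul_of_nonneg_right hWρ hb0)
          have h3 : frobNorm (γ • ((W - avgMat n) * ((1 - avgMat n) * h)))
              = γ * frobNorm ((W - avgMat n) * ((1 - avgMat n) * h)) := by
            rw [frobNorm_smul', abs_of_nonneg hγ]
          rw [h3]
          exact add_le_add h1 (mul_le_mul_of_nonneg_left h2 hγ)
  have hFsq : frobNorm ((1 - avgMat n) * x') ^ 2 ≤ (ρ * a + γ * (ρ * b)) ^ 2 :=
    pow_le_pow_left₀ (frobNorm_nonneg' _) hF 2
  have h1p : (0:ℝ) < 1 + ρ ^ 2 := by positivity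
  have h1m : (0:ℝ) < 1 - ρ ^ 2 := by nlinarith
  have final : (ρ * a + γ * (ρ * b)) ^ 2
      ≤ 2 * ρ ^ 2 / (1 + ρ ^ 2) * a ^ 2 + 2 * γ ^ 2 * ρ ^ 2 / (1 - ρ ^ 2) * b ^ 2 := by
    rw [div_mul_eq_mul_div, div_mul_eq_mul_div, div_add_div _ _ (ne_of_gt h1p) (ne_of_gt h1m),
      le_div_iff₀ (mul_pos h1p h1m)]
    nlinarith [mul_nonneg (sq_nonneg ρ) (sq_nonneg ((1 - ρ^2) * a - (1 + ρ^2) * γ * b))]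
  linarith


end
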